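/- If ℓ and m are positive sequences such that for every h > 0 there exists C_h > 0 with ℓ_k ≤ C_h h^k m_k for all k, and C_h^• denotes the optimal (smallest) such constant, then the sequence ℓ̃_k = inf_{h>0} C_h^• h^k m_k satisfies: (ℓ̃_k/ℓ̃_0, normalized to 1 at k = 0) makes (m_k / (ℓ̃_k/ℓ̃_0)) log-convex, i.e., (m_k/ℓ̄_k)^2 ≤ (m_{k-1}/ℓ̄_{k-1})(m_{k+1}/ℓ̄_{k+1}) for all k ≥ 1, provided the infimum is attained for each k. -/
import Mathlib


theorem regularized_quotient_logconvex
    (l m : ℕ → ℝ) (hlpos : ∀ k, 0 < l k) (hmpos : ∀ k, 0 < m k)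
    (hdom : ∀ h : ℝ, 0 < h → ∃ C : ℝ, 0 < C ∧ ∀ k : ℕ, l k ≤ C * h ^ k * m k)
    (Copt : ℝ → ℝ)
    -- Copt h is the optimal (smallest) constant C with l k ≤ C h^k m k
    (hCopt_bound : ∀ h : ℝ, 0 < h → ∀ k : ℕ, l k ≤ Copt h * h ^ k * m k)
    (hCopt_min : ∀ h : ℝ, 0 < h → ∀ C : ℝ,
      (∀ k : ℕ, l k ≤ C * h ^ k * m k) → Copt h ≤ C)
    (lt : ℕ → ℝ)
    -- lt k = inf over h > 0 of Copt h * h^k * m k, and the infimum is attained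
    (hlt_le : ∀ k : ℕ, ∀ h : ℝ, 0 < h → lt k ≤ Copt h * h ^ k * m k)
    (hlt_attained : ∀ k : ℕ, ∃ h : ℝ, 0 < h ∧ lt k = Copt h * h ^ k * m k)
    (lbar : ℕ → ℝ) (hlbar : ∀ k, lbar k = lt k / lt 0) :
    ∀ k : ℕ, 1 ≤ k →
      (m k / lbar k) ^ 2 ≤ (m (k - 1) / lbar (k - 1)) * (m (k + 1) / lbar (k + 1)) := by
  have hltpos : ∀ k, 0 < lt k := by
    intro k
    obtain ⟨h, hh, hk⟩ := hlt_attained k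
    rw [hk]
    exact lt_of_lt_of_le (hlpos k) (hCopt_bound h hh k)
  intro k hk
  obtain ⟨n, rfl⟩ : ∃ n, k = n + 1 := ⟨k - 1, by omega⟩
  simp only [Nat.add_sub_cancel, hlbar]
  obtain ⟨h, hh, heq⟩ := hlt_attained (n + 1)
  have hC : 0 < Copt h := by
    have := hCopt_bound h hh 0
    have hm0 := hmpos 0
    have hl0 := hlpos 0
    simp at this
    nlinarith
  have h1 : lt n ≤ Copt h * h ^ n * m n := hlt_le n h hh
  have h2 : lt (n + 2) ≤ Copt h * h ^ (n + 2) * m (n + 2) := hlt_le (n + 2) h hh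
  have hpow : h ^ n * h ^ (n + 2) = (h ^ (n + 1)) ^ 2 := by ring
  have key : lt n * lt (n + 2) * m (n + 1) ^ 2 ≤ lt (n + 1) ^ 2 * (m n * m (n + 2)) := by
    have hln := (hltpos n).le
    have hln2 := (hltpos (n + 2)).le
    have hmn := hmpos n
    have hmn2 := hmpos (n + 2)
    have hmn1 := hmpos (n + 1)
    have hhn : (0:ℝ) < h ^ n := pow_pos hh n
    have hhn2 : (0:ℝ) < h ^ (n + 2) := pow_pos hh (n + 2)
    have hprod : lt n * lt (n + 2) ≤ (Copt h * h ^ n * m n) * (Copt h * h ^ (n + 2) * m (n + 2)) := by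
      apply mul_le_mul h1 h2 hln2
      positivity
    calc lt n * lt (n + 2) * m (n + 1) ^ 2
        ≤ (Copt h * h ^ n * m n) * (Copt h * h ^ (n + 2) * m (n + 2)) * m (n + 1) ^ 2 := by
          nlinarith [sq_nonneg (m (n + 1))]
      _ = lt (n + 1) ^ 2 * (m n * m (n + 2)) := by rw [heq]; ring
  have h0 := hltpos 0
  have hn := hltpos n
  have hn1 := hltpos (n + 1)
  have hn2 := hltpos (n + 2)
  have hmn := hmpos n
  have hmn1 := hmpos (n + 1)
  have hmn2 := hmpos (n + 2)
  have e1 : m (n + 1) / (lt (n + 1) / lt 0) = m (n + 1) * lt 0 / lt (n + 1) := by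
    field_simp
  have e2 : m n / (lt n / lt 0) = m n * lt 0 / lt n := by field_simp
  have e3 : m (n + 1 + 1) / (lt (n + 1 + 1) / lt 0) = m (n + 2) * lt 0 / lt (n + 2) := by
    field_simp
  rw [e1, e2, e3, div_pow, div_mul_div_comm, div_le_div_iff₀ (by positivity) (by positivity)]
  nlinarith [key, mul_pos h0 h0, mul_pos hn hn2, sq_nonneg (lt 0)]
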